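/- The product of the smallest and the largest ratio is controlled by the scaling error: 1/(1 + ε) ≤ (min_{i} u_i) · (max_{i} u_i) ≤ 1/(1 − ε). -/

import Mathlib

open Finset

/-- The product of the smallest and the largest ratio `u i = v i / v̂ i`
is controlled by the scaling error: `1/(1+ε) ≤ (min_i u_i)·(max_i u_i) ≤ 1/(1-ε)`. -/
theorem min_max_ratio_product_bound
    {n : ℕ} (hn : 3 ≤ n)
    (A : Fin n → Fin n → ℝ)
    (hA_symm : ∀ i j, A i j = A j i)
    (hA_nonneg : ∀ i j, 0 ≤ A i j)
    (hA_diag : ∀ i, A i i = 0)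
    (hA_offdiag : ∀ i j, i ≠ j → 0 < A i j)
    (v : Fin n → ℝ) (hv : ∀ i, 0 < v i)
    (hds : ∀ i, ∑ j, v i * A i j * v j = 1)
    (ε : ℝ) (hε0 : 0 < ε) (hε1 : ε < 1)
    (vh : Fin n → ℝ) (hvh : ∀ i, 0 < vh i)
    (happrox : ∀ i, |∑ j, vh i * A i j * vh j - 1| ≤ ε) :
    1 / (1 + ε) ≤
      (Finset.inf' Finset.univ ⟨⟨0, by omega⟩, Finset.mem_univ _⟩
          (fun i => v i / vh i)) *
      (Finset.sup' Finset.univ ⟨⟨0, by omega⟩, Finset.mem_univ _⟩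
          (fun i => v i / vh i)) ∧
    (Finset.inf' Finset.univ ⟨⟨0, by omega⟩, Finset.mem_univ _⟩
          (fun i => v i / vh i)) *
      (Finset.sup' Finset.univ ⟨⟨0, by omega⟩, Finset.mem_univ _⟩
          (fun i => v i / vh i)) ≤ 1 / (1 - ε) := by
  have hne : (Finset.univ : Finset (Fin n)).Nonempty :=
    ⟨⟨0, by omega⟩, Finset.mem_univ _⟩
  set u : Fin n → ℝ := fun i => v i / vh i with hu
  have hu_pos : ∀ i, 0 < u i := fun i => div_pos (hv i) (hvh i)
  set m := Finset.inf' Finset.univ hne u with hmdef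
  set M := Finset.sup' Finset.univ hne u with hMdef
  have hm_le : ∀ j, m ≤ u j := fun j => Finset.inf'_le u (Finset.mem_univ j)
  have hle_M : ∀ j, u j ≤ M := fun j => Finset.le_sup' u (Finset.mem_univ j)
  obtain ⟨i0, -, hi0⟩ := Finset.exists_mem_eq_inf' hne u
  obtain ⟨i1, -, hi1⟩ := Finset.exists_mem_eq_sup' hne u
  have hm_pos : 0 < m := by rw [hmdef, hi0]; exact hu_pos i0
  have hM_pos : 0 < M := by rw [hMdef, hi1]; exact hu_pos i1
  have hmM : 0 < m * M := mul_pos hm_pos hM_pos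
  have heq : ∀ i j, vh i * A i j * vh j = (v i * A i j * v j) / (u i * u j) := by
    intro i j
    have h1 : v i ≠ 0 := (hv i).ne'
    have h2 : v j ≠ 0 := (hv j).ne'
    have h3 : vh i ≠ 0 := (hvh i).ne'
    have h4 : vh j ≠ 0 := (hvh j).ne'
    simp only [hu]
    field_simp
  -- lower bound
  have key1 : 1 / (m * M) ≤ ∑ j, vh i0 * A i0 j * vh j := by
    have hterm : ∀ j, (v i0 * A i0 j * v j) / (m * M) ≤ vh i0 * A i0 j * vh j := by
      intro j
      rw [heq i0 j]
      have hnum : 0 ≤ v i0 * A i0 j * v j := by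
        have := hA_nonneg i0 j
        have := (hv i0).le
        have := (hv j).le
        positivity
      have hden : u i0 * u j ≤ m * M := by
        rw [← hi0]
        exact mul_le_mul_of_nonneg_left (hle_M j) hm_pos.le
      gcongr
      exact mul_pos (hu_pos i0) (hu_pos j)
    calc 1 / (m * M) = (∑ j, v i0 * A i0 j * v j) / (m * M) := by rw [hds i0]
      _ = ∑ j, (v i0 * A i0 j * v j) / (m * M) := Finset.sum_div ..
      _ ≤ _ := Finset.sum_le_sum fun j _ => hterm j
  have key2 : ∑ j, vh i1 * A i1 j * vh j ≤ 1 / (m * M) := by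
    have hterm : ∀ j, vh i1 * A i1 j * vh j ≤ (v i1 * A i1 j * v j) / (m * M) := by
      intro j
      rw [heq i1 j]
      have hnum : 0 ≤ v i1 * A i1 j * v j := by
        have := hA_nonneg i1 j
        have := (hv i1).le
        have := (hv j).le
        positivity
      have hden : m * M ≤ u i1 * u j := by
        rw [← hi1]
        exact mul_le_mul_of_nonneg_right (hm_le j) hM_pos.le |>.trans_eq (mul_comm _ _)
      gcongr
    calc ∑ j, vh i1 * A i1 j * vh j ≤ ∑ j, (v i1 * A i1 j * v j) / (m * M) :=
          Finset.sum_le_sum fun j _ => hterm j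
      _ = (∑ j, v i1 * A i1 j * v j) / (m * M) := (Finset.sum_div ..).symm
      _ = 1 / (m * M) := by rw [hds i1]
  have h0 := abs_le.mp (happrox i0)
  have h1 := abs_le.mp (happrox i1)
  constructor
  · have hub : 1 / (m * M) ≤ 1 + ε := key1.trans (by linarith [h0.2])
    rw [div_le_iff₀ hmM] at hub
    rw [div_le_iff₀ (by linarith : (0:ℝ) < 1 + ε)]
    linarith
  · have hlb : 1 - ε ≤ 1 / (m * M) := le_trans (by linarith [h1.1]) key2
    rw [le_div_iff₀ hmM] at hlb
    rw [le_div_iff₀ (by linarith : (0:ℝ) < 1 - ε)]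
    linarith
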